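/- Let F : A → B and G : B → C be functors, and suppose F is an M(G)-fibration, where M(G) is the class of morphisms g of B with G g a monomorphism. Then any morphism f : A → A' of A such that both F f and G F f are monomorphisms factors as f = g ∘ k where g is a monomorphism in A and F k is an identity morphism. -/
import Mathlib


open CategoryTheory

universe v₁ v₂ v₃ u₁ u₂ u₃

variable {A : Type u₁} {B : Type u₂} {C : Type u₃}
variable [Category.{v₁} A] [Category.{v₂} B] [Category.{v₃} C]

/-- A morphism `f` of `A` is cartesian with respect to `F` over `F.map f`. -/
def IsCartesian (F : A ⥤ B) {X Y : A} (f : X ⟶ Y) : Prop :=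
  ∀ ⦃Z : A⦄ (g : Z ⟶ Y) (h : F.obj Z ⟶ F.obj X),
    h ≫ F.map f = F.map g → ∃! k : Z ⟶ X, F.map k = h ∧ k ≫ f = g

/-- `F` is a fibration relative to a class `M` of morphisms of `B`. -/
def IsMFibration (F : A ⥤ B) (M : MorphismProperty B) : Prop :=
  ∀ (A₀ : A) (B₀ : B) (f' : B₀ ⟶ F.obj A₀), M f' →
    ∃ (A' : A) (f : A' ⟶ A₀) (e : F.obj A' = B₀),
      F.map f = eqToHom e ≫ f' ∧ IsCartesian F f

/-- If `F` is an `M(G)`-fibration, then every morphism `f` with `F.map f` and `G.map (F.map f)`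
monomorphisms factors as `f = k ≫ g` with `g` a monomorphism and `F.map k` an identity. -/
theorem factorization_of_mono (F : A ⥤ B) (G : B ⥤ C)
    (hfib : IsMFibration F (fun _ _ g => Mono (G.map g)))
    {A₀ A' : A} (f : A₀ ⟶ A') (h1 : Mono (F.map f)) (h2 : Mono (G.map (F.map f))) :
    ∃ (E : A) (g : E ⟶ A') (k : A₀ ⟶ E) (e : F.obj A₀ = F.obj E),
      Mono g ∧ f = k ≫ g ∧ F.map k = eqToHom e := by
  obtain ⟨E, g, e, hg, hcart⟩ := hfib A' (F.obj A₀) (F.map f) h2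
  have hcomm : eqToHom e.symm ≫ F.map g = F.map f := by
    rw [hg, ← Category.assoc, eqToHom_trans, eqToHom_refl, Category.id_comp]
  obtain ⟨k, ⟨hk1, hk2⟩, _⟩ := hcart f (eqToHom e.symm) hcomm
  have hmonoFg : Mono (F.map g) := by
    rw [hg]; exact mono_comp _ _
  refine ⟨E, g, k, e.symm, ?_, hk2.symm, hk1⟩
  constructor
  intro Z u v huv
  have hFuv : F.map u = F.map v := by
    have : F.map u ≫ F.map g = F.map v ≫ F.map g := by
      rw [← F.map_comp, ← F.map_comp, huv]
    exact hmonoFg.right_cancellation _ _ this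
  obtain ⟨w, hw, hwu⟩ := hcart (u ≫ g) (F.map u) (by rw [← F.map_comp])
  have hu := hwu u ⟨rfl, rfl⟩
  have hv := hwu v ⟨hFuv.symm, huv.symm⟩
  rw [hu, hv]
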